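/- Under the assumptions ∫_{ℝ₊}ψ(·|v̂)=1, ∫_{S^{d-1}}q=1, ψ,q ≥ 0 integrable, and ψ_q^c/ψ_q ∈ L^∞, the operator 𝓛f = μ̂(ρf̃ q − f) + μ̃(ρf̂ ψ − f) is bounded on L²_T(𝒱): there exists a finite constant C > 0, depending only on μ̂, μ̃, and ‖ψ_q^c/ψ_q‖_{L^∞}, such that ‖𝓛f‖²_{L²_T} ≤ C‖f‖²_{L²_T} for all f ∈ L²_T(𝒱). -/

import Mathlib

open MeasureTheory Set
open scoped ENNReal

noncomputable section


noncomputable section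

set_option maxHeartbeats 2000000

/-- Lower Lebesgue integral on a product is at most the iterated integral,
for an arbitrary (possibly non-measurable) function. -/
lemma my_lintegral_prod_le {α β : Type*} [MeasurableSpace α] [MeasurableSpace β]
    (μ : Measure α) (ν : Measure β) [SFinite ν] (f : α × β → ℝ≥0∞) :
    ∫⁻ z, f z ∂μ.prod ν ≤ ∫⁻ x, ∫⁻ y, f (x, y) ∂ν ∂μ := by
  rw [lintegral_def]
  refine iSup₂_le fun g hg => ?_
  calc g.lintegral (μ.prod ν) = ∫⁻ z, g z ∂μ.prod ν :=
        (SimpleFunc.lintegral_eq_lintegral g _).symm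
    _ = ∫⁻ x, ∫⁻ y, g (x, y) ∂ν ∂μ := lintegral_prod _ g.measurable.aemeasurable
    _ ≤ _ := lintegral_mono fun x => lintegral_mono fun y => hg _

lemma my_lintegral_prod_symm_le {α β : Type*} [MeasurableSpace α] [MeasurableSpace β]
    (μ : Measure α) [SFinite μ] (ν : Measure β) [SFinite ν] (f : α × β → ℝ≥0∞) :
    ∫⁻ z, f z ∂μ.prod ν ≤ ∫⁻ y, ∫⁻ x, f (x, y) ∂μ ∂ν := by
  rw [← lintegral_prod_swap f]
  exact my_lintegral_prod_le ν μ (fun z => f z.swap)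

/-- a.e. property of the first coordinate lifts to the product. -/
lemma my_ae_fst {α β : Type*} [MeasurableSpace α] [MeasurableSpace β]
    {μ : Measure α} (ν : Measure β) [SFinite ν] {p : α → Prop}
    (h : ∀ᵐ x ∂μ, p x) : ∀ᵐ z ∂μ.prod ν, p z.1 := by
  rw [ae_iff] at h ⊢
  obtain ⟨t, hst, htm, ht0⟩ := exists_measurable_superset_of_null h
  refine measure_mono_null (fun z hz => ?_) (?_ : (μ.prod ν) (t ×ˢ (univ : Set β)) = 0)
  · exact ⟨hst hz, trivial⟩
  · rw [Measure.prod_prod, ht0, zero_mul]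

/-- Cauchy–Schwarz with weight: `(∫ g)² ≤ (∫ t) * ∫ g²/t` for `t > 0` a.e. -/
lemma my_cs {α : Type*} {m : MeasurableSpace α} {ν : Measure α} {g t : α → ℝ}
    (ht : ∀ᵐ x ∂ν, 0 < t x) (hg : Integrable g ν) (ht' : Integrable t ν)
    (hgt : Integrable (fun x => g x ^ 2 / t x) ν) :
    (∫ x, g x ∂ν) ^ 2 ≤ (∫ x, t x ∂ν) * ∫ x, g x ^ 2 / t x ∂ν := by
  set I := ∫ x, g x ^ 2 / t x ∂ν with hIdef
  set S := ∫ x, t x ∂ν with hSdef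
  set J := ∫ x, |g x| ∂ν with hJdef
  have hI : 0 ≤ I := integral_nonneg_of_ae (ht.mono fun x hx => div_nonneg (sq_nonneg _) hx.le)
  have hS : 0 ≤ S := integral_nonneg_of_ae (ht.mono fun x hx => hx.le)
  have hJ : 0 ≤ J := integral_nonneg fun x => abs_nonneg _
  have hJ2 : (∫ x, g x ∂ν) ^ 2 ≤ J ^ 2 := by
    have h1 : |∫ x, g x ∂ν| ≤ J := by
      simpa [Real.norm_eq_abs] using norm_integral_le_integral_norm g (μ := ν)
    nlinarith [abs_nonneg (∫ x, g x ∂ν), sq_abs (∫ x, g x ∂ν)]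
  have key : ∀ s : ℝ, 0 < s → J ≤ (1 / (2 * s)) * I + (s / 2) * S := by
    intro s hs
    have hpt : ∀ᵐ x ∂ν, |g x| ≤ (1 / (2 * s)) * (g x ^ 2 / t x) + (s / 2) * t x := by
      filter_upwards [ht] with x hx
      have he : (1 / (2 * s)) * (g x ^ 2 / t x) + (s / 2) * t x
          = (g x ^ 2 + s ^ 2 * t x ^ 2) / (2 * s * t x) := by
        field_simp
      rw [he, le_div_iff₀ (by positivity)]
      nlinarith [sq_nonneg (|g x| - s * t x), sq_abs (g x)]
    have hint : Integrable (fun x => (1 / (2 * s)) * (g x ^ 2 / t x) + (s / 2) * t x) ν :=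
      (hgt.const_mul _).add (ht'.const_mul _)
    calc J ≤ ∫ x, ((1 / (2 * s)) * (g x ^ 2 / t x) + (s / 2) * t x) ∂ν :=
          integral_mono_of_nonneg (Filter.Eventually.of_forall fun x => abs_nonneg _) hint hpt
      _ = (1 / (2 * s)) * I + (s / 2) * S := by
          rw [integral_add (hgt.const_mul _) (ht'.const_mul _), integral_const_mul,
            integral_const_mul]
  have hJSI : J ^ 2 ≤ S * I := by
    rcases eq_or_lt_of_le hJ with hJ0 | hJpos
    · rw [← hJ0]; simpa using mul_nonneg hS hI
    rcases eq_or_lt_of_le hS with hS0 | hSpos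
    · exfalso
      have hk := key ((I + 1) / J) (div_pos (by linarith) hJpos)
      rw [← hS0] at hk
      have h2 : (1 : ℝ) / (2 * ((I + 1) / J)) = J / (2 * (I + 1)) := by
        field_simp
      rw [h2, mul_zero, add_zero, div_mul_eq_mul_div,
        le_div_iff₀ (by linarith : (0:ℝ) < 2 * (I + 1))] at hk
      nlinarith [mul_nonneg hJ hI]
    · have hk := key (J / S) (div_pos hJpos hSpos)
      have h2 : (1 : ℝ) / (2 * (J / S)) = S / (2 * J) := by
        field_simp
      rw [h2] at hk
      have h3 : (J / S / 2) * S = J / 2 := by field_simp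
      rw [h3] at hk
      have h4 : S / (2 * J) * I = S * I / (2 * J) := by ring
      rw [h4] at hk
      have h5 : J / 2 ≤ S * I / (2 * J) := by linarith
      rw [div_le_div_iff₀ (by norm_num) (by positivity)] at h5
      nlinarith
  calc (∫ x, g x ∂ν) ^ 2 ≤ J ^ 2 := hJ2
    _ ≤ S * I := hJSI



abbrev Sd (d : ℕ) : Type := ↥(Metric.sphere (0 : EuclideanSpace ℝ (Fin d)) 1)

/-- The measure on the phase space `𝒱 = ℝ₊ × S^{d-1}`. -/
noncomputable def Vprod {d : ℕ} (σ : Measure (Sd d)) : Measure (ℝ × Sd d) :=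
  (volume.restrict (Ioi (0:ℝ))).prod σ

/-- `ψ_q(ṽ) = ∫_{S^{d-1}} ψ(ṽ|v̂) q(v̂) dv̂`. -/
noncomputable def psiq {d : ℕ} (σ : Measure (Sd d)) (ψ : ℝ → Sd d → ℝ) (q : Sd d → ℝ)
    (v : ℝ) : ℝ :=
  ∫ ω, ψ v ω * q ω ∂σ

/-- `ψ_q^c(ṽ|v̂) = (μ̂ ψ_q(ṽ) + μ̃ ψ(ṽ|v̂))/(μ̂ + μ̃)`. -/
noncomputable def psiqc {d : ℕ} (σ : Measure (Sd d)) (ψ : ℝ → Sd d → ℝ) (q : Sd d → ℝ)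
    (μhat μtil : ℝ) (v : ℝ) (ω : Sd d) : ℝ :=
  (μhat * psiq σ ψ q v + μtil * ψ v ω) / (μhat + μtil)

/-- `T(ṽ,v̂) = q(v̂) ψ_q^c(ṽ|v̂)`. -/
noncomputable def Tker {d : ℕ} (σ : Measure (Sd d)) (ψ : ℝ → Sd d → ℝ) (q : Sd d → ℝ)
    (μhat μtil : ℝ) (v : ℝ) (ω : Sd d) : ℝ :=
  q ω * psiqc σ ψ q μhat μtil v ω

/-- Total mass `ρ_φ = ∫_𝒱 φ` (iterated integral). -/
noncomputable def massOf {d : ℕ} (σ : Measure (Sd d)) (φ : ℝ → Sd d → ℝ) : ℝ :=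
  ∫ v in Ioi (0:ℝ), (∫ ω, φ v ω ∂σ)

/-- Speed marginal `ρ_φ φ̃(ṽ) = ∫_{S^{d-1}} φ(ṽ,v̂) dv̂`. -/
noncomputable def margS {d : ℕ} (σ : Measure (Sd d)) (φ : ℝ → Sd d → ℝ) (v : ℝ) : ℝ :=
  ∫ ω, φ v ω ∂σ

/-- Direction marginal `ρ_φ φ̂(v̂) = ∫_{ℝ₊} φ(ṽ,v̂) dṽ`. -/
noncomputable def margD {d : ℕ} (φ : ℝ → Sd d → ℝ) (ω : Sd d) : ℝ :=
  ∫ v in Ioi (0:ℝ), φ v ω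

/-- The combined scattering operator
`𝓛φ = μ̂ ρ_φ φ̃ q + μ̃ ρ_φ φ̂ ψ − (μ̂+μ̃) φ`. -/
noncomputable def Lop {d : ℕ} (σ : Measure (Sd d)) (ψ : ℝ → Sd d → ℝ) (q : Sd d → ℝ)
    (μhat μtil : ℝ) (φ : ℝ → Sd d → ℝ) (v : ℝ) (ω : Sd d) : ℝ :=
  μhat * margS σ φ v * q ω + μtil * margD φ ω * ψ v ω - (μhat + μtil) * φ v ω

/-- Marginal direction operator
`𝓛̂_q φ(v̂) = μ̂ ∫_{ℝ₊} ( q(v̂)∫_{S^{d-1}} φ(ṽ,v̂′)dv̂′ − φ(ṽ,v̂) ) dṽ`. -/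
noncomputable def LhatQ {d : ℕ} (σ : Measure (Sd d)) (q : Sd d → ℝ) (μhat : ℝ)
    (φ : ℝ → Sd d → ℝ) (ω : Sd d) : ℝ :=
  μhat * ∫ v in Ioi (0:ℝ), (q ω * (∫ ω', φ v ω' ∂σ) - φ v ω)

/-- Marginal speed operator
`𝓛̃_ψ φ(ṽ) = μ̃ ∫_{S^{d-1}} ( ψ(ṽ|v̂)∫_{ℝ₊} φ(ṽ′,v̂)dṽ′ − φ(ṽ,v̂) ) dv̂`. -/
noncomputable def LtilPsi {d : ℕ} (σ : Measure (Sd d)) (ψ : ℝ → Sd d → ℝ) (μtil : ℝ)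
    (φ : ℝ → Sd d → ℝ) (v : ℝ) : ℝ :=
  μtil * ∫ ω, (ψ v ω * (∫ v' in Ioi (0:ℝ), φ v' ω) - φ v ω) ∂σ


lemma my_ptwise (μhat μtil s c qv ψv F1 F2 fp : ℝ)
    (hμhat : 0 < μhat) (hμtil : 0 < μtil) (hs : 0 < s) (hc : 0 < c) (hq : 0 < qv)
    (hψ : 0 ≤ ψv) (hce : (μhat + μtil) * c = μhat * s + μtil * ψv) :
    (μhat * (F1 * qv - fp) + μtil * (F2 * ψv - fp)) ^ 2 / (qv * c)
      ≤ 3 * μhat * (μhat + μtil) * (F1 ^ 2 / s * qv)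
        + (3 * μtil * (μhat + μtil) * (F2 ^ 2 / qv * ψv)
          + 3 * (μhat + μtil) ^ 2 * (fp ^ 2 / (qv * c))) := by
  have hqc : 0 < qv * c := mul_pos hq hc
  have h3 : (μhat * (F1 * qv - fp) + μtil * (F2 * ψv - fp)) ^ 2
      ≤ 3 * (μhat * (F1 * qv)) ^ 2 + 3 * (μtil * (F2 * ψv)) ^ 2
        + 3 * ((μhat + μtil) * fp) ^ 2 := by
    nlinarith [sq_nonneg (μhat * (F1 * qv) - μtil * (F2 * ψv)),
      sq_nonneg (μhat * (F1 * qv) + (μhat + μtil) * fp),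
      sq_nonneg (μtil * (F2 * ψv) + (μhat + μtil) * fp)]
  have e1 : 3 * (μhat * (F1 * qv)) ^ 2 / (qv * c)
      ≤ 3 * μhat * (μhat + μtil) * (F1 ^ 2 / s * qv) := by
    rw [div_le_iff₀ hqc]
    have e : 3 * μhat * (μhat + μtil) * (F1 ^ 2 / s * qv) * (qv * c)
        = 3 * μhat * (F1 ^ 2 / s) * qv ^ 2 * ((μhat + μtil) * c) := by ring
    rw [e, hce]
    have e2 : 3 * μhat * (F1 ^ 2 / s) * qv ^ 2 * (μhat * s + μtil * ψv)
        = 3 * μhat ^ 2 * (F1 ^ 2 / s * s) * qv ^ 2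
          + 3 * μhat * μtil * (F1 ^ 2 / s) * qv ^ 2 * ψv := by ring
    rw [e2, div_mul_cancel₀ _ (ne_of_gt hs)]
    have h0 : 0 ≤ 3 * μhat * μtil * (F1 ^ 2 / s) * qv ^ 2 * ψv := by positivity
    nlinarith [h0]
  have e2 : 3 * (μtil * (F2 * ψv)) ^ 2 / (qv * c)
      ≤ 3 * μtil * (μhat + μtil) * (F2 ^ 2 / qv * ψv) := by
    rw [div_le_iff₀ hqc]
    have e : 3 * μtil * (μhat + μtil) * (F2 ^ 2 / qv * ψv) * (qv * c)
        = 3 * μtil * (F2 ^ 2 / qv * qv) * ψv * ((μhat + μtil) * c) := by ring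
    rw [e, hce, div_mul_cancel₀ _ (ne_of_gt hq)]
    have h0 : 0 ≤ 3 * μtil * μhat * F2 ^ 2 * ψv * s := by positivity
    nlinarith [h0]
  have e3 : 3 * ((μhat + μtil) * fp) ^ 2 / (qv * c)
      = 3 * (μhat + μtil) ^ 2 * (fp ^ 2 / (qv * c)) := by ring
  calc (μhat * (F1 * qv - fp) + μtil * (F2 * ψv - fp)) ^ 2 / (qv * c)
      ≤ (3 * (μhat * (F1 * qv)) ^ 2 + 3 * (μtil * (F2 * ψv)) ^ 2
        + 3 * ((μhat + μtil) * fp) ^ 2) / (qv * c) :=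
        div_le_div_of_nonneg_right h3 hqc.le
    _ = 3 * (μhat * (F1 * qv)) ^ 2 / (qv * c) + 3 * (μtil * (F2 * ψv)) ^ 2 / (qv * c)
        + 3 * ((μhat + μtil) * fp) ^ 2 / (qv * c) := by rw [add_div, add_div]
    _ ≤ _ := by rw [e3]; linarith [e1, e2]

/-- under the normalization assumptions on `ψ, q` and
`ψ_q^c/ψ_q ∈ L^∞` (bound `K`), the operator
`𝓛f = μ̂(ρf̃ q − f) + μ̃(ρf̂ ψ − f)` is bounded on `L²_T(𝒱)`: there is a finite
constant `C > 0` (depending only on `μ̂, μ̃, K`) with `‖𝓛f‖²_{L²_T} ≤ C ‖f‖²_{L²_T}`. -/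
theorem stmt_10 {d : ℕ} (σ : Measure (Sd d)) [SFinite σ]
    (ψ : ℝ → Sd d → ℝ) (q : Sd d → ℝ) (μhat μtil K : ℝ)
    (hμhat : 0 < μhat) (hμtil : 0 < μtil)
    (hψnn : ∀ v ω, 0 ≤ ψ v ω) (hqpos : ∀ ω, 0 < q ω)
    (hψint : ∀ ω, IntegrableOn (fun v => ψ v ω) (Ioi (0:ℝ)))
    (hqint : Integrable q σ)
    (hψnorm : ∀ ω, ∫ v in Ioi (0:ℝ), ψ v ω = 1)
    (hqnorm : ∫ ω, q ω ∂σ = 1)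
    (hψqpos : ∀ v ∈ Ioi (0:ℝ), 0 < psiq σ ψ q v)
    (hψqcpos : ∀ v ∈ Ioi (0:ℝ), ∀ ω, 0 < psiqc σ ψ q μhat μtil v ω)
    (hψqint : IntegrableOn (psiq σ ψ q) (Ioi (0:ℝ)))
    (hψqprod : ∀ v, Integrable (fun ω => ψ v ω * q ω) σ)
    (hK : ∀ v ∈ Ioi (0:ℝ), ∀ ω, psiqc σ ψ q μhat μtil v ω ≤ K * psiq σ ψ q v) :
    ∃ C : ℝ, 0 < C ∧
      ∀ f : ℝ × Sd d → ℝ,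
        Integrable f (Vprod σ) →
        Integrable (fun p => (f p) ^ 2 / Tker σ ψ q μhat μtil p.1 p.2) (Vprod σ) →
        (∀ ω, IntegrableOn (fun v => f (v, ω)) (Ioi (0:ℝ))) →
        (∀ v, Integrable (fun ω => f (v, ω)) σ) →
        Integrable (fun ω => (∫ v in Ioi (0:ℝ), f (v, ω)) ^ 2 / q ω) σ →
        IntegrableOn (fun v => (∫ ω, f (v, ω) ∂σ) ^ 2 / psiq σ ψ q v) (Ioi (0:ℝ)) →
        ∫ p, (μhat * ((∫ ω, f (p.1, ω) ∂σ) * q p.2 - f p)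
              + μtil * ((∫ v in Ioi (0:ℝ), f (v, p.2)) * ψ p.1 p.2 - f p)) ^ 2
              / Tker σ ψ q μhat μtil p.1 p.2 ∂(Vprod σ)
          ≤ C * ∫ p, (f p) ^ 2 / Tker σ ψ q μhat μtil p.1 p.2 ∂(Vprod σ) := by
  
  classical
  have hμμ : 0 < μhat + μtil := by linarith
  set ν := volume.restrict (Ioi (0:ℝ)) with hνdef
  -- constants
  set I₀ := ∫ v in Ioi (0:ℝ), psiq σ ψ q v with hI₀def
  have hI₀nn : 0 ≤ I₀ := setIntegral_nonneg measurableSet_Ioi (fun v hv => (hψqpos v hv).le)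
  set c₀ := (μhat * I₀ + μtil) / (μhat + μtil) with hc₀def
  have hc₀pos : 0 < c₀ := div_pos (by nlinarith) hμμ
  set A := 3 * μhat * (μhat + μtil) with hAdef
  set B := 3 * μtil * (μhat + μtil) with hBdef
  set D := 3 * (μhat + μtil) ^ 2 with hDdef
  have hApos : 0 < A := by nlinarith
  have hBpos : 0 < B := by nlinarith
  have hDpos : 0 < D := by nlinarith
  have hCpos : 0 < A + B * c₀ + D := by nlinarith [mul_pos hBpos hc₀pos]
  refine ⟨A + B * c₀ + D, hCpos, ?_⟩
  intro f hfint hΦ hfv hfω hwint huint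
  simp only [Vprod] at hfint hΦ ⊢
  rw [← hνdef] at hfint hΦ ⊢
  -- abbreviations
  set Φ : ℝ × Sd d → ℝ := fun p => f p ^ 2 / Tker σ ψ q μhat μtil p.1 p.2 with hΦdef
  set u : ℝ → ℝ := fun v => (∫ ω, f (v, ω) ∂σ) ^ 2 / psiq σ ψ q v with hudef
  set w : Sd d → ℝ := fun ω => (∫ v in Ioi (0:ℝ), f (v, ω)) ^ 2 / q ω with hwdef
  set R := ∫ p, Φ p ∂ν.prod σ with hRdef
  set Ψ3 : Sd d → ℝ := fun ω => ∫ v in Ioi (0:ℝ), Φ (v, ω) with hΨ3def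
  set F1 : ℝ → ℝ := fun v => ∫ ω, Φ (v, ω) ∂σ with hF1def
  have haefst : ∀ᵐ p ∂ν.prod σ, p.1 ∈ Ioi (0:ℝ) :=
    my_ae_fst σ (ae_restrict_mem measurableSet_Ioi)
  have hTpos : ∀ᵐ p ∂ν.prod σ, 0 < Tker σ ψ q μhat μtil p.1 p.2 :=
    haefst.mono fun p hp => mul_pos (hqpos p.2) (hψqcpos p.1 hp p.2)
  have hΦnn : 0 ≤ᵐ[ν.prod σ] Φ :=
    hTpos.mono fun p hp => div_nonneg (sq_nonneg _) hp.le
  have hRnn : 0 ≤ R := integral_nonneg_of_ae hΦnn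
  by_cases hH : Integrable (fun p : ℝ × Sd d =>
      (μhat * ((∫ ω, f (p.1, ω) ∂σ) * q p.2 - f p)
        + μtil * ((∫ v in Ioi (0:ℝ), f (v, p.2)) * ψ p.1 p.2 - f p)) ^ 2
        / Tker σ ψ q μhat μtil p.1 p.2) (ν.prod σ)
  swap
  · rw [integral_undef hH]
    exact mul_nonneg hCpos.le hRnn
  -- integrability and integral of T slices (in ω)
  have hTωeq : ∀ v : ℝ, (fun ω => Tker σ ψ q μhat μtil v ω)
      = fun ω => (μhat * psiq σ ψ q v / (μhat + μtil)) * q ω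
        + (μtil / (μhat + μtil)) * (ψ v ω * q ω) := by
    intro v; funext ω; simp only [Tker, psiqc]; field_simp
  have hTωint : ∀ v : ℝ, Integrable (fun ω => Tker σ ψ q μhat μtil v ω) σ := by
    intro v; rw [hTωeq v]
    exact (hqint.const_mul _).add ((hψqprod v).const_mul _)
  have hTωval : ∀ v : ℝ, ∫ ω, Tker σ ψ q μhat μtil v ω ∂σ = psiq σ ψ q v := by
    intro v
    rw [hTωeq v, integral_add (hqint.const_mul _) ((hψqprod v).const_mul _),
      integral_const_mul, integral_const_mul, hqnorm]
    have : ∫ ω, ψ v ω * q ω ∂σ = psiq σ ψ q v := rfl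
    rw [this]; field_simp
  -- integrability and integral of T slices (in v)
  have hTveq : ∀ ω : Sd d, (fun v => Tker σ ψ q μhat μtil v ω)
      = fun v => (q ω * μhat / (μhat + μtil)) * psiq σ ψ q v
        + (q ω * μtil / (μhat + μtil)) * ψ v ω := by
    intro ω; funext v; simp only [Tker, psiqc]; field_simp
  have hTvint : ∀ ω : Sd d, Integrable (fun v => Tker σ ψ q μhat μtil v ω) ν := by
    intro ω; rw [hTveq ω]
    exact (hψqint.const_mul _).add ((hψint ω).const_mul _)
  have hTvval : ∀ ω : Sd d, ∫ v in Ioi (0:ℝ), Tker σ ψ q μhat μtil v ω = c₀ * q ω := by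
    intro ω
    rw [hνdef] at *
    rw [hTveq ω, integral_add ((hψqint.const_mul _)) ((hψint ω).const_mul _),
      integral_const_mul, integral_const_mul, hψnorm ω, ← hI₀def, hc₀def]
    field_simp
  -- Cauchy-Schwarz in ω (for a.e. v)
  have hF1int : Integrable F1 ν := hΦ.integral_prod_left
  have hΨ3int : Integrable Ψ3 σ := hΦ.integral_prod_right
  have hu_le : ∀ᵐ v ∂ν, u v ≤ F1 v := by
    filter_upwards [hΦ.prod_right_ae, (ae_restrict_mem measurableSet_Ioi :
      ∀ᵐ v ∂ν, v ∈ Ioi (0:ℝ))] with v hslice hv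
    have hcs := my_cs (g := fun ω => f (v, ω)) (t := fun ω => Tker σ ψ q μhat μtil v ω)
      (Filter.Eventually.of_forall fun ω => mul_pos (hqpos ω) (hψqcpos v hv ω))
      (hfω v) (hTωint v) hslice
    rw [hTωval v] at hcs
    rw [hudef]
    rw [div_le_iff₀ (hψqpos v hv)]
    calc (∫ ω, f (v, ω) ∂σ) ^ 2 ≤ psiq σ ψ q v * ∫ ω, Φ (v, ω) ∂σ := hcs
      _ = F1 v * psiq σ ψ q v := by rw [hF1def]; ring
  have hU_le : ∫ v in Ioi (0:ℝ), u v ≤ R := by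
    rw [← hνdef] at *
    have hR1 : R = ∫ v, F1 v ∂ν := by rw [hRdef, integral_prod Φ hΦ]
    rw [hR1]
    refine integral_mono_of_nonneg ?_ hF1int hu_le
    filter_upwards [(ae_restrict_mem measurableSet_Ioi : ∀ᵐ v ∂ν, v ∈ Ioi (0:ℝ))] with v hv
    exact div_nonneg (sq_nonneg _) (hψqpos v hv).le
  have hUnn : 0 ≤ ∫ v in Ioi (0:ℝ), u v := by
    rw [← hνdef]
    refine integral_nonneg_of_ae ?_
    filter_upwards [(ae_restrict_mem measurableSet_Ioi : ∀ᵐ v ∂ν, v ∈ Ioi (0:ℝ))] with v hv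
    exact div_nonneg (sq_nonneg _) (hψqpos v hv).le
  -- Cauchy-Schwarz in v (for a.e. ω)
  have hΨ3nn : ∀ ω, 0 ≤ Ψ3 ω := by
    intro ω
    rw [hΨ3def, ← hνdef]
    refine integral_nonneg_of_ae ?_
    filter_upwards [(ae_restrict_mem measurableSet_Ioi : ∀ᵐ v ∂ν, v ∈ Ioi (0:ℝ))] with v hv
    exact div_nonneg (sq_nonneg _) (mul_pos (hqpos ω) (hψqcpos v hv ω)).le
  have hw_le : ∀ᵐ ω ∂σ, w ω ≤ c₀ * Ψ3 ω := by
    filter_upwards [hΦ.prod_left_ae] with ω hslice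
    have htpos : ∀ᵐ v ∂ν, 0 < Tker σ ψ q μhat μtil v ω := by
      filter_upwards [(ae_restrict_mem measurableSet_Ioi : ∀ᵐ v ∂ν, v ∈ Ioi (0:ℝ))] with v hv
      exact mul_pos (hqpos ω) (hψqcpos v hv ω)
    have hcs := my_cs (g := fun v => f (v, ω)) (t := fun v => Tker σ ψ q μhat μtil v ω)
      htpos (hfv ω) (hTvint ω) hslice
    rw [hνdef] at hcs
    rw [hTvval ω] at hcs
    rw [hwdef]
    rw [div_le_iff₀ (hqpos ω)]
    calc (∫ v in Ioi (0:ℝ), f (v, ω)) ^ 2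
        ≤ c₀ * q ω * ∫ v in Ioi (0:ℝ), Φ (v, ω) := hcs
      _ = c₀ * Ψ3 ω * q ω := by rw [hΨ3def]; ring
  have hwnn : ∀ ω, 0 ≤ w ω := fun ω => div_nonneg (sq_nonneg _) (hqpos ω).le
  have hR2 : R = ∫ ω, Ψ3 ω ∂σ := by rw [hRdef, integral_prod_symm Φ hΦ]
  have hW_le : ∫ ω, w ω ∂σ ≤ c₀ * R := by
    have h1 : ∫ ω, w ω ∂σ ≤ ∫ ω, c₀ * Ψ3 ω ∂σ :=
      integral_mono_of_nonneg (Filter.Eventually.of_forall hwnn)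
        (hΨ3int.const_mul c₀) hw_le
    rw [integral_const_mul] at h1
    rw [hR2]; exact h1
  have hWnn : 0 ≤ ∫ ω, w ω ∂σ := integral_nonneg hwnn
  -- pointwise bound
  set G : ℝ × Sd d → ℝ := fun p =>
    A * (u p.1 * q p.2) + (B * (w p.2 * ψ p.1 p.2) + D * Φ p) with hGdef
  have hpt : ∀ᵐ p ∂ν.prod σ,
      (μhat * ((∫ ω, f (p.1, ω) ∂σ) * q p.2 - f p)
        + μtil * ((∫ v in Ioi (0:ℝ), f (v, p.2)) * ψ p.1 p.2 - f p)) ^ 2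
        / Tker σ ψ q μhat μtil p.1 p.2 ≤ G p := by
    filter_upwards [haefst] with p hp
    have hce : (μhat + μtil) * psiqc σ ψ q μhat μtil p.1 p.2
        = μhat * psiq σ ψ q p.1 + μtil * ψ p.1 p.2 := by
      simp only [psiqc]; field_simp
    simp only [hGdef, hudef, hwdef, hΦdef, hAdef, hBdef, hDdef, Tker]
    exact my_ptwise μhat μtil _ _ _ _ _ _ _ hμhat hμtil (hψqpos _ hp) (hψqcpos _ hp p.2)
      (hqpos p.2) (hψnn p.1 p.2) hce
  -- nonnegativity of the LHS integrand
  have hHnn : 0 ≤ᵐ[ν.prod σ] fun p : ℝ × Sd d =>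
      (μhat * ((∫ ω, f (p.1, ω) ∂σ) * q p.2 - f p)
        + μtil * ((∫ v in Ioi (0:ℝ), f (v, p.2)) * ψ p.1 p.2 - f p)) ^ 2
        / Tker σ ψ q μhat μtil p.1 p.2 :=
    hTpos.mono fun p hp => div_nonneg (sq_nonneg _) hp.le
  rw [integral_eq_lintegral_of_nonneg_ae hHnn hH.aestronglyMeasurable]
  refine ENNReal.toReal_le_of_le_ofReal (mul_nonneg hCpos.le hRnn) ?_
  -- the main lintegral chain
  have hinner : ∀ᵐ ω ∂σ,
      (∫⁻ v, ENNReal.ofReal (G (v, ω)) ∂ν)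
        ≤ ENNReal.ofReal (A * (∫ v in Ioi (0:ℝ), u v) * q ω)
          + (ENNReal.ofReal (B * w ω) + ENNReal.ofReal (D * Ψ3 ω)) := by
    filter_upwards [hΦ.prod_left_ae] with ω hslice
    have hm1 : AEMeasurable (fun v => ENNReal.ofReal (A * (u v * q ω))) ν :=
      ENNReal.measurable_ofReal.comp_aemeasurable
        ((huint.aestronglyMeasurable.aemeasurable.mul_const (q ω)).const_mul A)
    have hm2 : AEMeasurable (fun v => ENNReal.ofReal (B * (w ω * ψ v ω))) ν :=
      ENNReal.measurable_ofReal.comp_aemeasurable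
        (((hψint ω).aestronglyMeasurable.aemeasurable.const_mul (w ω)).const_mul B)
    calc ∫⁻ v, ENNReal.ofReal (G (v, ω)) ∂ν
        ≤ ∫⁻ v, (ENNReal.ofReal (A * (u v * q ω))
            + (ENNReal.ofReal (B * (w ω * ψ v ω)) + ENNReal.ofReal (D * Φ (v, ω)))) ∂ν := by
          refine lintegral_mono fun v => ?_
          rw [hGdef]
          refine le_trans ENNReal.ofReal_add_le ?_
          exact add_le_add le_rfl ENNReal.ofReal_add_le
      _ = (∫⁻ v, ENNReal.ofReal (A * (u v * q ω)) ∂ν)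
          + ((∫⁻ v, ENNReal.ofReal (B * (w ω * ψ v ω)) ∂ν)
            + ∫⁻ v, ENNReal.ofReal (D * Φ (v, ω)) ∂ν) := by
          rw [lintegral_add_left' hm1, lintegral_add_left' hm2]
      _ = ENNReal.ofReal (A * (∫ v in Ioi (0:ℝ), u v) * q ω)
          + (ENNReal.ofReal (B * w ω) + ENNReal.ofReal (D * Ψ3 ω)) := by
          congr 1
          · rw [← ofReal_integral_eq_lintegral_ofReal]
            · congr 1
              have he : (fun v => A * (u v * q ω)) = fun v => (A * q ω) * u v := by
                funext v; ring
              rw [hνdef, he, integral_const_mul]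
              ring
            · have he : (fun v => A * (u v * q ω)) = fun v => (A * q ω) * u v := by
                funext v; ring
              rw [he]; exact huint.const_mul _
            · filter_upwards [(ae_restrict_mem measurableSet_Ioi :
                ∀ᵐ v ∂ν, v ∈ Ioi (0:ℝ))] with v hv
              have : 0 ≤ u v := div_nonneg (sq_nonneg _) (hψqpos v hv).le
              exact mul_nonneg hApos.le (mul_nonneg this (hqpos ω).le)
          congr 1
          · rw [← ofReal_integral_eq_lintegral_ofReal]
            · congr 1
              have he : (fun v => B * (w ω * ψ v ω)) = fun v => (B * w ω) * ψ v ω := by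
                funext v; ring
              rw [hνdef, he, integral_const_mul, hψnorm ω]
              ring
            · have he : (fun v => B * (w ω * ψ v ω)) = fun v => (B * w ω) * ψ v ω := by
                funext v; ring
              rw [he]; exact (hψint ω).const_mul _
            · refine Filter.Eventually.of_forall fun v => ?_
              have h1 : 0 ≤ w ω := hwnn ω
              have h2 : 0 ≤ ψ v ω := hψnn v ω
              exact mul_nonneg hBpos.le (mul_nonneg h1 h2)
          · rw [← ofReal_integral_eq_lintegral_ofReal (hslice.const_mul D)]
            · congr 1
              rw [hνdef, integral_const_mul, hΨ3def]
            · filter_upwards [(ae_restrict_mem measurableSet_Ioi :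
                ∀ᵐ v ∂ν, v ∈ Ioi (0:ℝ))] with v hv
              have : 0 ≤ Φ (v, ω) :=
                div_nonneg (sq_nonneg _) (mul_pos (hqpos ω) (hψqcpos v hv ω)).le
              exact mul_nonneg hDpos.le this
  calc ∫⁻ p, ENNReal.ofReal ((μhat * ((∫ ω, f (p.1, ω) ∂σ) * q p.2 - f p)
        + μtil * ((∫ v in Ioi (0:ℝ), f (v, p.2)) * ψ p.1 p.2 - f p)) ^ 2
        / Tker σ ψ q μhat μtil p.1 p.2) ∂ν.prod σ
      ≤ ∫⁻ p, ENNReal.ofReal (G p) ∂ν.prod σ :=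
        lintegral_mono_ae (hpt.mono fun p h => ENNReal.ofReal_le_ofReal h)
    _ ≤ ∫⁻ ω, ∫⁻ v, ENNReal.ofReal (G (v, ω)) ∂ν ∂σ :=
        my_lintegral_prod_symm_le ν σ _
    _ ≤ ∫⁻ ω, (ENNReal.ofReal (A * (∫ v in Ioi (0:ℝ), u v) * q ω)
          + (ENNReal.ofReal (B * w ω) + ENNReal.ofReal (D * Ψ3 ω))) ∂σ :=
        lintegral_mono_ae hinner
    _ = ENNReal.ofReal (A * (∫ v in Ioi (0:ℝ), u v) * 1)
        + (ENNReal.ofReal (B * ∫ ω, w ω ∂σ) + ENNReal.ofReal (D * ∫ ω, Ψ3 ω ∂σ)) := by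
        have hm1 : AEMeasurable (fun ω => ENNReal.ofReal
            (A * (∫ v in Ioi (0:ℝ), u v) * q ω)) σ :=
          ENNReal.measurable_ofReal.comp_aemeasurable
            (hqint.aestronglyMeasurable.aemeasurable.const_mul _)
        have hm2 : AEMeasurable (fun ω => ENNReal.ofReal (B * w ω)) σ :=
          ENNReal.measurable_ofReal.comp_aemeasurable
            (hwint.aestronglyMeasurable.aemeasurable.const_mul B)
        rw [lintegral_add_left' hm1, lintegral_add_left' hm2]
        congr 1
        · rw [← ofReal_integral_eq_lintegral_ofReal (hqint.const_mul _)]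
          · rw [integral_const_mul, hqnorm]
          · exact Filter.Eventually.of_forall fun ω =>
              mul_nonneg (mul_nonneg hApos.le hUnn) (hqpos ω).le
        congr 1
        · rw [← ofReal_integral_eq_lintegral_ofReal (hwint.const_mul B)]
          · rw [integral_const_mul]
          · exact Filter.Eventually.of_forall fun ω =>
              mul_nonneg hBpos.le (hwnn ω)
        · rw [← ofReal_integral_eq_lintegral_ofReal (hΨ3int.const_mul D)]
          · rw [integral_const_mul]
          · exact Filter.Eventually.of_forall fun ω =>
              mul_nonneg hDpos.le (hΨ3nn ω)
    _ ≤ ENNReal.ofReal ((A + B * c₀ + D) * R) := by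
        have hq1 : 0 ≤ B * ∫ ω, w ω ∂σ := mul_nonneg hBpos.le hWnn
        have hq3 : 0 ≤ ∫ ω, Ψ3 ω ∂σ := by rw [← hR2]; exact hRnn
        have hq2 : 0 ≤ D * ∫ ω, Ψ3 ω ∂σ := mul_nonneg hDpos.le hq3
        have hq0 : 0 ≤ A * (∫ v in Ioi (0:ℝ), u v) * 1 :=
          mul_nonneg (mul_nonneg hApos.le hUnn) zero_le_one
        rw [← ENNReal.ofReal_add hq1 hq2, ← ENNReal.ofReal_add hq0 (by linarith)]
        refine ENNReal.ofReal_le_ofReal ?_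
        have h1 : A * (∫ v in Ioi (0:ℝ), u v) * 1 ≤ A * R := by
          rw [mul_one]
          exact mul_le_mul_of_nonneg_left hU_le hApos.le
        have h2 : B * ∫ ω, w ω ∂σ ≤ B * (c₀ * R) :=
          mul_le_mul_of_nonneg_left hW_le hBpos.le
        have h3 : D * ∫ ω, Ψ3 ω ∂σ = D * R := by rw [← hR2]
        nlinarith [h1, h2, h3]


end
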